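/- Let n, k : ℕ and let r : Fin k → ((Fin n → ZMod 2) × (Fin n → ZMod 2)), with r i = (p i, q i), be a family that is linearly independent over ZMod 2 and whose pairwise symplectic products vanish: (p i)·(q j) + (q i)·(p j) = 0 in ZMod 2 for all i, j. Then there exist scalars λ : Fin k → ℂ with each λ i ∈ ({1, -1, Complex.I, -Complex.I} : Set ℂ) such that the matrices T i := λ i • M(p i, q i) satisfy: (i) (T i)^2 = 1 for all i; (ii) T i * T j = T j * T i for all i, j; (iii) for every c : Fin k → ZMod 2, if ∏ i, (T i)^(c i) = 1 then c = 0; and (iv) for every c : Fin k → ZMod 2, ∏ i, (T i)^(c i) ≠ -1, where 1 denotes the identity matrix and (T i)^(c i) means T i when c i = 1 and the identity when c i = 0. -/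

import Mathlib

/-- The sign `(-1)^x` for `x : ZMod 2`: `-1` if `x = 1` and `1` if `x = 0`. -/
noncomputable def msign (x : ZMod 2) : ℂ := if x = 1 then -1 else 1

/-- The dot product `q · b = ∑ i, q i * b i` in `ZMod 2`. -/
def zdot {n : ℕ} (q b : Fin n → ZMod 2) : ZMod 2 := ∑ i, q i * b i

/-- The Pauli word matrix `M(p,q)`, representing `X^{p₁}Z^{q₁} ⊗ ⋯ ⊗ X^{pₙ}Z^{qₙ}`:
its `(a,b)` entry is `(-1)^(q·b)` if `a = b + p` and `0` otherwise. -/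
noncomputable def pauliM {n : ℕ} (p q : Fin n → ZMod 2) :
    Matrix (Fin n → ZMod 2) (Fin n → ZMod 2) ℂ :=
  fun a b => if a = b + p then msign (zdot q b) else 0

lemma zmod2_cases : ∀ x : ZMod 2, x = 0 ∨ x = 1 := by decide

lemma msign_add : ∀ x y : ZMod 2, msign (x + y) = msign x * msign y := by
  intro x y
  rcases zmod2_cases x with hx | hx <;> rcases zmod2_cases y with hy | hy <;>
    subst hx <;> subst hy <;> norm_num [msign] <;> decide

lemma msign_zero : msign 0 = 1 := by norm_num [msign]

lemma msign_ne_zero (x : ZMod 2) : msign x ≠ 0 := by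
  rcases zmod2_cases x with h | h <;> subst h <;> norm_num [msign]

lemma msign_eq_one_iff (x : ZMod 2) : msign x = 1 ↔ x = 0 := by
  rcases zmod2_cases x with h | h <;> subst h <;> norm_num [msign]

lemma zdot_comm {n : ℕ} (a b : Fin n → ZMod 2) : zdot a b = zdot b a := by
  simp [zdot, mul_comm]

lemma zdot_add_right {n : ℕ} (q b c : Fin n → ZMod 2) :
    zdot q (b + c) = zdot q b + zdot q c := by
  simp [zdot, mul_add, Finset.sum_add_distrib]

lemma zdot_add_left {n : ℕ} (q s b : Fin n → ZMod 2) :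
    zdot (q + s) b = zdot q b + zdot s b := by
  simp [zdot, add_mul, Finset.sum_add_distrib]

lemma zdot_zero_right {n : ℕ} (q : Fin n → ZMod 2) : zdot q 0 = 0 := by simp [zdot]

lemma zdot_single {n : ℕ} (q : Fin n → ZMod 2) (i : Fin n) :
    zdot q (Pi.single i 1) = q i := by
  simp [zdot, Pi.single_apply, mul_ite]

lemma pauliM_zero {n : ℕ} : pauliM (0 : Fin n → ZMod 2) 0 = 1 := by
  ext a b
  simp [pauliM, Matrix.one_apply, zdot, msign_zero]

lemma pauliM_mul {n : ℕ} (p q s t : Fin n → ZMod 2) :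
    pauliM p q * pauliM s t = msign (zdot q s) • pauliM (p + s) (q + t) := by
  ext a b
  simp only [Matrix.mul_apply, pauliM, Matrix.smul_apply, smul_eq_mul]
  rw [Finset.sum_eq_single (b + s)]
  · have h1 : (a = b + s + p) ↔ (a = b + (p + s)) := by
      constructor <;> (intro h; subst h; abel)
    by_cases h : a = b + (p + s)
    · rw [if_pos (h1.mpr h), if_pos rfl, if_pos h]
      rw [zdot_add_right, zdot_add_left, msign_add, msign_add]
      ring
    · rw [if_neg (fun hh => h (h1.mp hh)), if_pos rfl, if_neg h]
      ring
  · intro x _ hx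
    rw [if_neg (fun hh : x = b + s => hx hh), mul_zero]
  · simp

lemma zmod2_add_eq_zero : ∀ a b : ZMod 2, a + b = 0 → a = b := by decide

lemma zmod2_add_self : ∀ a : ZMod 2, a + a = 0 := by decide

lemma pi_add_self {n : ℕ} (v : Fin n → ZMod 2) : v + v = 0 :=
  funext fun i => zmod2_add_self (v i)

lemma smul_pauli_mul {n : ℕ} (x y : ℂ) (p q s t : Fin n → ZMod 2) :
    (x • pauliM p q) * (y • pauliM s t)
      = (x * y * msign (zdot q s)) • pauliM (p + s) (q + t) := by
  rw [Matrix.smul_mul, Matrix.mul_smul, pauliM_mul, smul_smul, smul_smul, mul_assoc]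

lemma scalar_eq {n : ℕ} {P Q : Fin n → ZMod 2} {μ ε : ℂ} (hμ : μ ≠ 0)
    (h : μ • pauliM P Q = ε • (1 : Matrix (Fin n → ZMod 2) (Fin n → ZMod 2) ℂ)) :
    P = 0 ∧ Q = 0 ∧ μ = ε := by
  have key : ∀ a b, μ * (if a = b + P then msign (zdot Q b) else 0)
      = ε * (if a = b then 1 else 0) := by
    intro a b
    have := congrFun (congrFun h a) b
    simpa [pauliM, Matrix.smul_apply, Matrix.one_apply, mul_ite] using this
  have hP : P = 0 := by
    by_contra hP
    have h1 := key P 0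
    rw [if_pos (zero_add P).symm, if_neg hP, zdot_zero_right, msign_zero, mul_one,
      mul_zero] at h1
    exact hμ h1
  subst hP
  have hdiag : ∀ b, μ * msign (zdot Q b) = ε := by
    intro b
    have h1 := key b b
    rwa [if_pos (add_zero b).symm, if_pos rfl, mul_one] at h1
  have hμε : μ = ε := by
    have := hdiag 0
    rwa [zdot_zero_right, msign_zero, mul_one] at this
  refine ⟨rfl, ?_, hμε⟩
  funext i
  have h1 := hdiag (Pi.single i 1)
  rw [zdot_single, ← hμε] at h1
  have : msign (Q i) = 1 := mul_left_cancel₀ hμ (h1.trans (mul_one μ).symm)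
  simpa using (msign_eq_one_iff (Q i)).mp this

lemma prod_form {n : ℕ} (L : List (ℂ × ((Fin n → ZMod 2) × (Fin n → ZMod 2))))
    (hL : ∀ x ∈ L, x.1 ≠ 0) :
    ∃ μ : ℂ, μ ≠ 0 ∧
      (L.map (fun x => x.1 • pauliM x.2.1 x.2.2)).prod =
        μ • pauliM (L.map (fun x => x.2.1)).sum (L.map (fun x => x.2.2)).sum := by
  induction L with
  | nil => exact ⟨1, one_ne_zero, by simp [pauliM_zero]⟩
  | cons a L ih =>
    obtain ⟨μ, hμ, hprod⟩ := ih (fun x hx => hL x (List.mem_cons_of_mem a hx))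
    refine ⟨a.1 * μ * msign (zdot a.2.2 (L.map (fun x => x.2.1)).sum), ?_, ?_⟩
    · exact mul_ne_zero (mul_ne_zero (hL a List.mem_cons_self) hμ)
        (msign_ne_zero _)
    · simp only [List.map_cons, List.prod_cons, List.sum_cons, hprod, smul_pauli_mul]

/-- A full-rank parity check matrix over `ZMod 2` with vanishing pairwise symplectic
products of its rows defines a stabilizer subgroup: one can rescale the corresponding
Pauli words by phases `λ i ∈ {1, -1, i, -i}` so that the resulting matrices `T i` are
self-inverse, pairwise commuting, independent (no nontrivial product equals the identity),
and generate a group not containing `-1`. -/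
theorem parity_check_defines_stabilizer (n k : ℕ)
    (r : Fin k → ((Fin n → ZMod 2) × (Fin n → ZMod 2)))
    (hli : LinearIndependent (ZMod 2) r)
    (hsymp : ∀ i j, zdot (r i).1 (r j).2 + zdot (r i).2 (r j).1 = 0) :
    ∃ lam : Fin k → ℂ, (∀ i, lam i ∈ ({1, -1, Complex.I, -Complex.I} : Set ℂ)) ∧
      (∀ i, (lam i • pauliM (r i).1 (r i).2) * (lam i • pauliM (r i).1 (r i).2) = 1) ∧
      (∀ i j, (lam i • pauliM (r i).1 (r i).2) * (lam j • pauliM (r j).1 (r j).2) =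
        (lam j • pauliM (r j).1 (r j).2) * (lam i • pauliM (r i).1 (r i).2)) ∧
      (∀ c : Fin k → ZMod 2,
        (List.ofFn (fun i => (lam i • pauliM (r i).1 (r i).2) ^ (c i).val)).prod = 1 →
          c = 0) ∧
      (∀ c : Fin k → ZMod 2,
        (List.ofFn (fun i => (lam i • pauliM (r i).1 (r i).2) ^ (c i).val)).prod ≠ -1) := by
  set lam : Fin k → ℂ := fun i => if zdot (r i).2 (r i).1 = 1 then Complex.I else 1
    with hlam
  have hlam_ne : ∀ i, lam i ≠ 0 := by
    intro i
    by_cases h : zdot (r i).2 (r i).1 = 1 <;>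
      simp [hlam, h, Complex.I_ne_zero]
  -- a common normal form for products ∏ Tᵢ^(cᵢ)
  have key : ∀ c : Fin k → ZMod 2, ∃ μ : ℂ, μ ≠ 0 ∧
      (List.ofFn (fun i => (lam i • pauliM (r i).1 (r i).2) ^ (c i).val)).prod =
        μ • pauliM (∑ i, c i • (r i).1) (∑ i, c i • (r i).2) := by
    intro c
    set g : Fin k → (ℂ × ((Fin n → ZMod 2) × (Fin n → ZMod 2))) :=
      fun i => if c i = 0 then (1, (0, 0)) else (lam i, r i) with hg
    have hgne : ∀ x ∈ List.ofFn g, x.1 ≠ 0 := by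
      intro x hx
      rw [List.mem_ofFn] at hx
      obtain ⟨i, rfl⟩ := hx
      by_cases h : c i = 0 <;> simp [hg, h, hlam_ne i]
    obtain ⟨μ, hμ, hprod⟩ := prod_form (List.ofFn g) hgne
    refine ⟨μ, hμ, ?_⟩
    have e1 : List.ofFn (fun i => (lam i • pauliM (r i).1 (r i).2) ^ (c i).val)
        = (List.ofFn g).map (fun x => x.1 • pauliM x.2.1 x.2.2) := by
      rw [List.map_ofFn]
      congr 1
      funext i
      rcases zmod2_cases (c i) with h | h <;>
        simp [hg, h, pauliM_zero, show ZMod.val (1 : ZMod 2) = 1 from rfl]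
    have e2 : ((List.ofFn g).map (fun x => x.2.1)).sum = ∑ i, c i • (r i).1 := by
      rw [List.map_ofFn, List.sum_ofFn]
      refine Finset.sum_congr rfl fun i _ => ?_
      rcases zmod2_cases (c i) with h | h <;> simp [hg, h]
    have e3 : ((List.ofFn g).map (fun x => x.2.2)).sum = ∑ i, c i • (r i).2 := by
      rw [List.map_ofFn, List.sum_ofFn]
      refine Finset.sum_congr rfl fun i _ => ?_
      rcases zmod2_cases (c i) with h | h <;> simp [hg, h]
    rw [e1, hprod, e2, e3]
  -- from a scalar product, get c = 0
  have czero : ∀ (c : Fin k → ZMod 2) (ε : ℂ),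
      (List.ofFn (fun i => (lam i • pauliM (r i).1 (r i).2) ^ (c i).val)).prod =
        ε • (1 : Matrix (Fin n → ZMod 2) (Fin n → ZMod 2) ℂ) → c = 0 := by
    intro c ε h
    obtain ⟨μ, hμ, hprod⟩ := key c
    rw [hprod] at h
    obtain ⟨h1, h2, _⟩ := scalar_eq hμ h
    have hsum : ∑ i, c i • r i = 0 := by
      have := Prod.ext_iff.mpr (⟨?_, ?_⟩ :
        (∑ i, c i • r i).1 = (0 : (Fin n → ZMod 2) × (Fin n → ZMod 2)).1 ∧
        (∑ i, c i • r i).2 = (0 : (Fin n → ZMod 2) × (Fin n → ZMod 2)).2)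
      · exact this
      · rw [Prod.fst_sum]; simpa using h1
      · rw [Prod.snd_sum]; simpa using h2
    funext i
    exact Fintype.linearIndependent_iff.mp hli c hsum i
  refine ⟨lam, ?_, ?_, ?_, ?_, ?_⟩
  · intro i
    by_cases h : zdot (r i).2 (r i).1 = 1 <;> simp [hlam, h]
  · intro i
    rw [smul_pauli_mul, pi_add_self, pi_add_self, pauliM_zero]
    rcases zmod2_cases (zdot (r i).2 (r i).1) with h | h <;>
      simp [hlam, h, msign, Complex.I_mul_I]
  · intro i j
    rw [smul_pauli_mul, smul_pauli_mul, add_comm (r j).1 (r i).1,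
      add_comm (r j).2 (r i).2]
    have hij : zdot (r i).2 (r j).1 = zdot (r j).2 (r i).1 := by
      have h1 := zmod2_add_eq_zero _ _ (hsymp i j)
      rw [← h1, zdot_comm]
    rw [hij]
    ring_nf
  · intro c h
    exact czero c 1 (by rw [h, one_smul])
  · intro c h
    have hc : c = 0 := czero c (-1) (by rw [h, neg_smul, one_smul])
    subst hc
    have hone :
        (List.ofFn (fun i => (lam i • pauliM (r i).1 (r i).2) ^ ((0 : Fin k → ZMod 2) i).val)).prod
          = 1 := by
      apply List.prod_eq_one
      intro x hx
      rw [List.mem_ofFn] at hx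
      obtain ⟨i, rfl⟩ := hx
      norm_num
    rw [hone] at h
    have h00 := congrFun (congrFun h 0) 0
    simp [Matrix.one_apply, Matrix.neg_apply] at h00
    exact absurd h00 (by norm_num)
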